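/- The rational function g(v₂,v₃,w₂,w₃) = C(v₂w₂(1+(1+v₂)w₂+(1+v₂+v₃)w₃)/((v₂+v₃+v₃w₂)w₃)) — i.e., any function of the single first integral I = v₂w₂(1+(1+v₂)w₂+(1+v₂+v₃)w₃)/((v₂+v₃+v₃w₂)w₃) — satisfies the first-order PDE (v₂+v₃)w₃·∂g/∂w₃ + v₂w₂·∂g/∂w₂ − v₃(1+2v₂+v₃)·∂g/∂v₃ − v₂(1+v₂)·∂g/∂v₂ = 0. In particular, the operator annihilates I itself. -/

import Mathlib

/-- The first integral `I = v₂w₂(1+(1+v₂)w₂+(1+v₂+v₃)w₃)/((v₂+v₃+v₃w₂)w₃)`. -/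
noncomputable def Ifun (v2 v3 w2 w3 : ℝ) : ℝ :=
  v2 * w2 * (1 + (1 + v2) * w2 + (1 + v2 + v3) * w3) / ((v2 + v3 + v3 * w2) * w3)

/-- Derivative of a quadratic. -/
lemma quad_hasDerivAt (a b c t : ℝ) :
    HasDerivAt (fun x : ℝ => a + b * x + c * x ^ 2) (b + 2 * c * t) t := by
  have h1 : HasDerivAt (fun x : ℝ => x) 1 t := hasDerivAt_id t
  have h2 : HasDerivAt (fun x : ℝ => x ^ 2) (2 * t) t := by
    simpa using hasDerivAt_pow 2 t
  have h : HasDerivAt (fun x : ℝ => a + b * x + c * x ^ 2) (b * 1 + c * (2 * t)) t :=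
    ((h1.const_mul b).const_add a).add (h2.const_mul c)
  convert h using 1
  ring

/-- Derivative of a quotient of quadratics. -/
lemma quot_hasDerivAt (a b c d e f t : ℝ) (h : d + e * t + f * t ^ 2 ≠ 0) :
    HasDerivAt (fun x : ℝ => (a + b * x + c * x ^ 2) / (d + e * x + f * x ^ 2))
      (((b + 2 * c * t) * (d + e * t + f * t ^ 2)
        - (a + b * t + c * t ^ 2) * (e + 2 * f * t)) / (d + e * t + f * t ^ 2) ^ 2) t :=
  (quad_hasDerivAt a b c t).div (quad_hasDerivAt d e f t) h

/-- Any (differentiable) function `g = C ∘ I` of the first integral `I` satisfies the PDE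
`(v₂+v₃)w₃ ∂g/∂w₃ + v₂w₂ ∂g/∂w₂ − v₃(1+2v₂+v₃) ∂g/∂v₃ − v₂(1+v₂) ∂g/∂v₂ = 0`;
in particular (taking `C = id`) the operator annihilates `I` itself. -/
theorem stmt_7 (v2 v3 w2 w3 : ℝ)
    (hd : v2 + v3 + v3 * w2 ≠ 0) (hw3 : w3 ≠ 0)
    (C : ℝ → ℝ) (hC : DifferentiableAt ℝ C (Ifun v2 v3 w2 w3)) :
    (v2 + v3) * w3 * deriv (fun t => C (Ifun v2 v3 w2 t)) w3
      + v2 * w2 * deriv (fun t => C (Ifun v2 v3 t w3)) w2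
      - v3 * (1 + 2 * v2 + v3) * deriv (fun t => C (Ifun v2 t w2 w3)) v3
      - v2 * (1 + v2) * deriv (fun t => C (Ifun t v3 w2 w3)) v2 = 0 := by
  have hE : (v2 + v3 + v3 * w2) * w3 ≠ 0 := mul_ne_zero hd hw3
  have hc : HasDerivAt C (deriv C (Ifun v2 v3 w2 w3)) (Ifun v2 v3 w2 w3) := hC.hasDerivAt
  -- w3 direction
  have hden1 : (0 : ℝ) + (v2 + v3 + v3 * w2) * w3 + 0 * w3 ^ 2 ≠ 0 := by
    have : (0 : ℝ) + (v2 + v3 + v3 * w2) * w3 + 0 * w3 ^ 2 = (v2 + v3 + v3 * w2) * w3 := by ring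
    rw [this]; exact hE
  have H1 : HasDerivAt (fun t => Ifun v2 v3 w2 t)
      (((v2 * w2 * (1 + v2 + v3) + 2 * 0 * w3) * (0 + (v2 + v3 + v3 * w2) * w3 + 0 * w3 ^ 2)
        - (v2 * w2 * (1 + (1 + v2) * w2) + v2 * w2 * (1 + v2 + v3) * w3 + 0 * w3 ^ 2)
            * ((v2 + v3 + v3 * w2) + 2 * 0 * w3))
        / (0 + (v2 + v3 + v3 * w2) * w3 + 0 * w3 ^ 2) ^ 2) w3 := by
    have h := quot_hasDerivAt (v2 * w2 * (1 + (1 + v2) * w2)) (v2 * w2 * (1 + v2 + v3)) 0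
      0 (v2 + v3 + v3 * w2) 0 w3 hden1
    apply h.congr_of_eventuallyEq
    filter_upwards with x
    unfold Ifun; ring
  -- w2 direction
  have hden2 : (v2 + v3) * w3 + v3 * w3 * w2 + 0 * w2 ^ 2 ≠ 0 := by
    have : (v2 + v3) * w3 + v3 * w3 * w2 + 0 * w2 ^ 2 = (v2 + v3 + v3 * w2) * w3 := by ring
    rw [this]; exact hE
  have H2 : HasDerivAt (fun t => Ifun v2 v3 t w3)
      (((v2 * (1 + (1 + v2 + v3) * w3) + 2 * (v2 * (1 + v2)) * w2)
            * ((v2 + v3) * w3 + v3 * w3 * w2 + 0 * w2 ^ 2)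
        - (0 + v2 * (1 + (1 + v2 + v3) * w3) * w2 + v2 * (1 + v2) * w2 ^ 2)
            * (v3 * w3 + 2 * 0 * w2))
        / ((v2 + v3) * w3 + v3 * w3 * w2 + 0 * w2 ^ 2) ^ 2) w2 := by
    have h := quot_hasDerivAt 0 (v2 * (1 + (1 + v2 + v3) * w3)) (v2 * (1 + v2))
      ((v2 + v3) * w3) (v3 * w3) 0 w2 hden2
    apply h.congr_of_eventuallyEq
    filter_upwards with x
    unfold Ifun; ring
  -- v3 direction
  have hden3 : v2 * w3 + (1 + w2) * w3 * v3 + 0 * v3 ^ 2 ≠ 0 := by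
    have : v2 * w3 + (1 + w2) * w3 * v3 + 0 * v3 ^ 2 = (v2 + v3 + v3 * w2) * w3 := by ring
    rw [this]; exact hE
  have H3 : HasDerivAt (fun t => Ifun v2 t w2 w3)
      (((v2 * w2 * w3 + 2 * 0 * v3) * (v2 * w3 + (1 + w2) * w3 * v3 + 0 * v3 ^ 2)
        - (v2 * w2 * (1 + (1 + v2) * w2 + (1 + v2) * w3) + v2 * w2 * w3 * v3 + 0 * v3 ^ 2)
            * ((1 + w2) * w3 + 2 * 0 * v3))
        / (v2 * w3 + (1 + w2) * w3 * v3 + 0 * v3 ^ 2) ^ 2) v3 := by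
    have h := quot_hasDerivAt (v2 * w2 * (1 + (1 + v2) * w2 + (1 + v2) * w3)) (v2 * w2 * w3) 0
      (v2 * w3) ((1 + w2) * w3) 0 v3 hden3
    apply h.congr_of_eventuallyEq
    filter_upwards with x
    unfold Ifun; ring
  -- v2 direction
  have hden4 : v3 * (1 + w2) * w3 + w3 * v2 + 0 * v2 ^ 2 ≠ 0 := by
    have : v3 * (1 + w2) * w3 + w3 * v2 + 0 * v2 ^ 2 = (v2 + v3 + v3 * w2) * w3 := by ring
    rw [this]; exact hE
  have H4 : HasDerivAt (fun t => Ifun t v3 w2 w3)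
      ((((w2 + w2 ^ 2 + w2 * w3 + v3 * w2 * w3) + 2 * (w2 ^ 2 + w2 * w3) * v2)
            * (v3 * (1 + w2) * w3 + w3 * v2 + 0 * v2 ^ 2)
        - (0 + (w2 + w2 ^ 2 + w2 * w3 + v3 * w2 * w3) * v2 + (w2 ^ 2 + w2 * w3) * v2 ^ 2)
            * (w3 + 2 * 0 * v2))
        / (v3 * (1 + w2) * w3 + w3 * v2 + 0 * v2 ^ 2) ^ 2) v2 := by
    have h := quot_hasDerivAt 0 (w2 + w2 ^ 2 + w2 * w3 + v3 * w2 * w3) (w2 ^ 2 + w2 * w3)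
      (v3 * (1 + w2) * w3) w3 0 v2 hden4
    apply h.congr_of_eventuallyEq
    filter_upwards with x
    unfold Ifun; ring
  have e1 : deriv (fun t => C (Ifun v2 v3 w2 t)) w3 = deriv C (Ifun v2 v3 w2 w3) * _ :=
    (hc.comp w3 H1).deriv
  have e2 : deriv (fun t => C (Ifun v2 v3 t w3)) w2 = deriv C (Ifun v2 v3 w2 w3) * _ :=
    (hc.comp w2 H2).deriv
  have e3 : deriv (fun t => C (Ifun v2 t w2 w3)) v3 = deriv C (Ifun v2 v3 w2 w3) * _ :=
    (hc.comp v3 H3).deriv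
  have e4 : deriv (fun t => C (Ifun t v3 w2 w3)) v2 = deriv C (Ifun v2 v3 w2 w3) * _ :=
    (hc.comp v2 H4).deriv
  rw [e1, e2, e3, e4,
    show (0 + (v2 + v3 + v3 * w2) * w3 + 0 * w3 ^ 2) = (v2 + v3 + v3 * w2) * w3 from by ring,
    show ((v2 + v3) * w3 + v3 * w3 * w2 + 0 * w2 ^ 2) = (v2 + v3 + v3 * w2) * w3 from by ring,
    show (v2 * w3 + (1 + w2) * w3 * v3 + 0 * v3 ^ 2) = (v2 + v3 + v3 * w2) * w3 from by ring,
    show (v3 * (1 + w2) * w3 + w3 * v2 + 0 * v2 ^ 2) = (v2 + v3 + v3 * w2) * w3 from by ring]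
  field_simp
  ring
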